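/- (Pfaffian analogue of the Cauchy–Binet identity.) Let m ≤ M with m even, let T be an m×M matrix and A an M×M antisymmetric matrix over a commutative ring. Then Σ_{S ⊆ {1,…,M}, |S| = m} Pf(A_S) · det(T_S) = Pf(T A Tᵗ), where A_S denotes the m×m submatrix of A with rows and columns indexed by S (in increasing order) and T_S the m×m submatrix of T with columns indexed by S (in increasing order). -/

import Mathlib

noncomputable section

open scoped BigOperators
open Matrix

/-- The element of `Fin (2*n)` at even position `2k`. -/
def fe (n : ℕ) (k : Fin n) : Fin (2 * n) :=
  ⟨2 * (k : ℕ), by have := k.isLt; omega⟩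

/-- The element of `Fin (2*n)` at odd position `2k+1`. -/
def fo (n : ℕ) (k : Fin n) : Fin (2 * n) :=
  ⟨2 * (k : ℕ) + 1, by have := k.isLt; omega⟩

/-- The Pfaffian of a (skew-symmetric) `2n × 2n` matrix, defined as the sum over all
perfect matchings: permutations `σ` with `σ(2k) < σ(2k+1)` and
`σ(0) < σ(2) < ⋯ < σ(2n-2)`, of `sign σ · ∏ₖ A (σ (2k)) (σ (2k+1))`. -/
def pf {R : Type*} [CommRing R] {n : ℕ} (A : Matrix (Fin (2 * n)) (Fin (2 * n)) R) : R :=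
  ∑ σ ∈ Finset.univ.filter (fun σ : Equiv.Perm (Fin (2 * n)) =>
      (∀ k : Fin n, σ (fe n k) < σ (fo n k)) ∧
        ∀ k l : Fin n, k < l → σ (fe n k) < σ (fe n l)),
    ((Equiv.Perm.sign σ : ℤ) : R) * ∏ k : Fin n, A (σ (fe n k)) (σ (fo n k))

namespace PfAux
open Equiv Equiv.Perm Finset

variable {n : ℕ} {R : Type*} [CommRing R]

lemma fe_lt_fo (k : Fin n) : fe n k < fo n k := by
  simp only [fe, fo, Fin.lt_def]; omega

lemma fe_ne_fo (k l : Fin n) : fe n k ≠ fo n l := by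
  simp only [fe, fo, Fin.ext_iff, ne_eq]
  omega

lemma fe_inj : Function.Injective (fe n) := fun k l h => by
  simp only [fe, Fin.ext_iff] at h
  exact Fin.ext (by omega)

lemma fo_inj : Function.Injective (fo n) := fun k l h => by
  simp only [fo, Fin.ext_iff] at h
  exact Fin.ext (by omega)

lemma fe_lt_fe_iff {k l : Fin n} : fe n k < fe n l ↔ k < l := by
  simp only [fe, Fin.lt_def]; omega

lemma eo_cases (i : Fin (2 * n)) : (∃ k, i = fe n k) ∨ (∃ k, i = fo n k) := by
  have hi := i.isLt
  rcases Nat.even_or_odd i.val with ⟨k, hk⟩ | ⟨k, hk⟩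
  · exact Or.inl ⟨⟨k, by omega⟩, Fin.ext (by simp only [fe]; omega)⟩
  · exact Or.inr ⟨⟨k, by omega⟩, Fin.ext (by simp only [fo]; omega)⟩

/-- The term of the Pfaffian sum associated to a permutation. -/
def term (B : Matrix (Fin (2 * n)) (Fin (2 * n)) R) (μ : Perm (Fin (2 * n))) : R :=
  ((Perm.sign μ : ℤ) : R) * ∏ k : Fin n, B (μ (fe n k)) (μ (fo n k))

/-- The finset of canonical (matching-normal-form) permutations. -/
def canonSet (n : ℕ) : Finset (Perm (Fin (2 * n))) :=
  Finset.univ.filter (fun σ : Equiv.Perm (Fin (2 * n)) =>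
      (∀ k : Fin n, σ (fe n k) < σ (fo n k)) ∧
        ∀ k l : Fin n, k < l → σ (fe n k) < σ (fe n l))

lemma mem_canonSet {σ : Perm (Fin (2 * n))} :
    σ ∈ canonSet n ↔ ((∀ k : Fin n, σ (fe n k) < σ (fo n k)) ∧
        ∀ k l : Fin n, k < l → σ (fe n k) < σ (fe n l)) := by
  simp [canonSet]

lemma pf_eq (B : Matrix (Fin (2 * n)) (Fin (2 * n)) R) :
    pf B = ∑ σ ∈ canonSet n, term B σ := rfl

def half (i : Fin (2 * n)) : Fin n := ⟨i.val / 2, by have := i.isLt; omega⟩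

lemma half_fe (k : Fin n) : half (fe n k) = k := Fin.ext (by simp only [half, fe]; omega)

lemma half_fo (k : Fin n) : half (fo n k) = k := Fin.ext (by simp only [half, fo]; omega)

lemma fe_mod (k : Fin n) : (fe n k).val % 2 = 0 := by simp only [fe]; omega

lemma fo_mod (k : Fin n) : (fo n k).val % 2 = 1 := by simp only [fo]; omega

/-- block permutation induced by a permutation of the pairs -/
def blkFun (π : Perm (Fin n)) : Fin (2 * n) → Fin (2 * n) := fun i =>
  if i.val % 2 = 0 then fe n (π (half i)) else fo n (π (half i))

lemma blkFun_fe (π : Perm (Fin n)) (k : Fin n) : blkFun π (fe n k) = fe n (π k) := by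
  simp [blkFun, fe_mod, half_fe]

lemma blkFun_fo (π : Perm (Fin n)) (k : Fin n) : blkFun π (fo n k) = fo n (π k) := by
  simp [blkFun, fo_mod, half_fo]

def blk (π : Perm (Fin n)) : Perm (Fin (2 * n)) where
  toFun := blkFun π
  invFun := blkFun π⁻¹
  left_inv := by
    intro i
    rcases eo_cases i with ⟨k, rfl⟩ | ⟨k, rfl⟩ <;>
      simp [blkFun_fe, blkFun_fo]
  right_inv := by
    intro i
    rcases eo_cases i with ⟨k, rfl⟩ | ⟨k, rfl⟩ <;>
      simp [blkFun_fe, blkFun_fo]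

@[simp] lemma blk_fe (π : Perm (Fin n)) (k : Fin n) : blk π (fe n k) = fe n (π k) :=
  blkFun_fe π k

@[simp] lemma blk_fo (π : Perm (Fin n)) (k : Fin n) : blk π (fo n k) = fo n (π k) :=
  blkFun_fo π k

lemma blk_one : blk (1 : Perm (Fin n)) = 1 := by
  ext i
  rcases eo_cases i with ⟨k, rfl⟩ | ⟨k, rfl⟩ <;> simp

lemma blk_mul (π ρ : Perm (Fin n)) : blk (π * ρ) = blk π * blk ρ := by
  ext i
  rcases eo_cases i with ⟨k, rfl⟩ | ⟨k, rfl⟩ <;> simp [Perm.mul_apply]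

@[simp] lemma fe_eq_fe_iff {k l : Fin n} : fe n k = fe n l ↔ k = l :=
  ⟨fun h => fe_inj h, fun h => h ▸ rfl⟩

@[simp] lemma fo_eq_fo_iff {k l : Fin n} : fo n k = fo n l ↔ k = l :=
  ⟨fun h => fo_inj h, fun h => h ▸ rfl⟩

@[simp] lemma fe_eq_fo_iff {k l : Fin n} : fe n k = fo n l ↔ False :=
  iff_false_intro (fe_ne_fo k l)

@[simp] lemma fo_eq_fe_iff {k l : Fin n} : fo n k = fe n l ↔ False :=
  iff_false_intro (Ne.symm (fe_ne_fo l k))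

lemma blk_swap (x y : Fin n) :
    blk (Equiv.swap x y) = Equiv.swap (fe n x) (fe n y) * Equiv.swap (fo n x) (fo n y) := by
  ext i
  rcases eo_cases i with ⟨k, rfl⟩ | ⟨k, rfl⟩ <;>
    by_cases hkx : k = x <;> by_cases hky : k = y <;>
      simp [blk_fe, blk_fo, Perm.mul_apply, Equiv.swap_apply_def, hkx, hky]

lemma sign_blk (π : Perm (Fin n)) : Perm.sign (blk π) = 1 := by
  refine Equiv.Perm.swap_induction_on π ?_ ?_
  · rw [blk_one]; simp
  · intro π x y hxy ih
    rw [blk_mul, Equiv.Perm.sign_mul, ih, blk_swap, Equiv.Perm.sign_mul,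
      Perm.sign_swap (fun h => hxy (fe_inj h)), Perm.sign_swap (fun h => hxy (fo_inj h))]
    norm_num

/-- pair-block preserving permutations -/
def Hp (h : Perm (Fin (2 * n))) : Prop :=
  ∀ k : Fin n, ∃ l : Fin n, (h (fe n k) = fe n l ∧ h (fo n k) = fo n l) ∨
    (h (fe n k) = fo n l ∧ h (fo n k) = fe n l)

lemma Hp_one : Hp (1 : Perm (Fin (2 * n))) := fun k => ⟨k, Or.inl ⟨rfl, rfl⟩⟩

lemma Hp_mul {g h : Perm (Fin (2 * n))} (hg : Hp g) (hh : Hp h) : Hp (g * h) := by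
  intro k
  obtain ⟨l, hl⟩ := hh k
  obtain ⟨m, hm⟩ := hg l
  refine ⟨m, ?_⟩
  rcases hl with ⟨h1, h2⟩ | ⟨h1, h2⟩ <;> rcases hm with ⟨g1, g2⟩ | ⟨g1, g2⟩ <;>
    simp [Perm.mul_apply, h1, h2, g1, g2]

/-- the induced map on pair indices -/
noncomputable def pmap {h : Perm (Fin (2 * n))} (hh : Hp h) : Fin n → Fin n :=
  fun k => (hh k).choose

lemma pmap_spec {h : Perm (Fin (2 * n))} (hh : Hp h) (k : Fin n) :
    (h (fe n k) = fe n (pmap hh k) ∧ h (fo n k) = fo n (pmap hh k)) ∨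
      (h (fe n k) = fo n (pmap hh k) ∧ h (fo n k) = fe n (pmap hh k)) :=
  (hh k).choose_spec

lemma pmap_inj {h : Perm (Fin (2 * n))} (hh : Hp h) : Function.Injective (pmap hh) := by
  intro k1 k2 hk
  rcases pmap_spec hh k1 with ⟨a1, b1⟩ | ⟨a1, b1⟩ <;>
    rcases pmap_spec hh k2 with ⟨a2, b2⟩ | ⟨a2, b2⟩
  · have : h (fe n k1) = h (fe n k2) := by rw [a1, a2, hk]
    exact fe_inj (h.injective this)
  · have : h (fe n k1) = h (fo n k2) := by rw [a1, b2, hk]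
    exact absurd (h.injective this) (fe_ne_fo k1 k2)
  · have : h (fe n k2) = h (fo n k1) := by rw [a2, b1, hk]
    exact absurd (h.injective this) (fe_ne_fo k2 k1)
  · have : h (fe n k1) = h (fe n k2) := by rw [a1, a2, hk]
    exact fe_inj (h.injective this)

lemma pmap_surj {h : Perm (Fin (2 * n))} (hh : Hp h) : Function.Surjective (pmap hh) :=
  Finite.surjective_of_injective (pmap_inj hh)

lemma Hp_inv {h : Perm (Fin (2 * n))} (hh : Hp h) : Hp h⁻¹ := by
  intro k
  obtain ⟨l, hl⟩ := pmap_surj hh k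
  refine ⟨l, ?_⟩
  rcases hl ▸ pmap_spec hh l with ⟨a, b⟩ | ⟨a, b⟩
  · exact Or.inl ⟨by rw [← a, Equiv.Perm.coe_inv, Equiv.symm_apply_apply], by rw [← b, Equiv.Perm.coe_inv, Equiv.symm_apply_apply]⟩
  · exact Or.inr ⟨by rw [← b, Equiv.Perm.coe_inv, Equiv.symm_apply_apply], by rw [← a, Equiv.Perm.coe_inv, Equiv.symm_apply_apply]⟩

lemma swap_disj {k l : Fin n} (hkl : k ≠ l) :
    Perm.Disjoint (Equiv.swap (fe n k) (fo n k)) (Equiv.swap (fe n l) (fo n l)) := by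
  intro x
  rcases eq_or_ne x (fe n k) with rfl | h1
  · right; exact Equiv.swap_apply_of_ne_of_ne (by simp [hkl]) (by simp)
  rcases eq_or_ne x (fo n k) with rfl | h2
  · right; exact Equiv.swap_apply_of_ne_of_ne (by simp) (by simp [hkl])
  · left; exact Equiv.swap_apply_of_ne_of_ne h1 h2

/-- product of within-pair flips over a set of pair indices -/
def flips (s : Finset (Fin n)) : Perm (Fin (2 * n)) :=
  s.noncommProd (fun k => Equiv.swap (fe n k) (fo n k))
    (fun k _ l _ hkl => (swap_disj hkl).commute)

lemma flips_insert {s : Finset (Fin n)} {a : Fin n} (ha : a ∉ s) :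
    flips (insert a s) = Equiv.swap (fe n a) (fo n a) * flips s := by
  classical
  exact Finset.noncommProd_insert_of_notMem _ _ _ _ ha

lemma flips_apply (s : Finset (Fin n)) :
    ∀ k : Fin n, (flips s (fe n k) = if k ∈ s then fo n k else fe n k) ∧
      (flips s (fo n k) = if k ∈ s then fe n k else fo n k) := by
  classical
  induction s using Finset.induction_on with
  | empty => intro k; simp [flips]; exact ⟨rfl, rfl⟩
  | insert _ _ ha =>
      rename_i a s ih
      intro k
      rw [flips_insert ha, Perm.mul_apply, Perm.mul_apply, (ih k).1, (ih k).2]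
      rcases eq_or_ne k a with rfl | hka
      · simp [ha, Equiv.swap_apply_def]
      · by_cases hks : k ∈ s <;>
          simp [hks, hka, Finset.mem_insert, Equiv.swap_apply_def, Ne.symm hka]

lemma Hp_flips (s : Finset (Fin n)) : Hp (flips s) := by
  intro k
  refine ⟨k, ?_⟩
  rcases (flips_apply s k) with ⟨h1, h2⟩
  by_cases hks : k ∈ s
  · exact Or.inr ⟨by rw [h1, if_pos hks], by rw [h2, if_pos hks]⟩
  · exact Or.inl ⟨by rw [h1, if_neg hks], by rw [h2, if_neg hks]⟩

lemma Hp_blk (π : Perm (Fin n)) : Hp (blk π) :=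
  fun k => ⟨π k, Or.inl ⟨blk_fe π k, blk_fo π k⟩⟩

section TermInv

variable (B : Matrix (Fin (2 * n)) (Fin (2 * n)) R)

lemma term_mul_swap (hB : ∀ i j, B j i = -B i j) (μ : Perm (Fin (2 * n))) (k₀ : Fin n) :
    term B (μ * Equiv.swap (fe n k₀) (fo n k₀)) = term B μ := by
  unfold term
  rw [Equiv.Perm.sign_mul, Perm.sign_swap (fe_ne_fo k₀ k₀)]
  have hprod : ∏ k : Fin n, B ((μ * Equiv.swap (fe n k₀) (fo n k₀)) (fe n k))
      ((μ * Equiv.swap (fe n k₀) (fo n k₀)) (fo n k))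
      = -∏ k : Fin n, B (μ (fe n k)) (μ (fo n k)) := by
    rw [← Finset.mul_prod_erase Finset.univ _ (Finset.mem_univ k₀),
        ← Finset.mul_prod_erase Finset.univ (fun k => B (μ (fe n k)) (μ (fo n k)))
          (Finset.mem_univ k₀)]
    have h1 : (μ * Equiv.swap (fe n k₀) (fo n k₀)) (fe n k₀) = μ (fo n k₀) := by
      simp [Perm.mul_apply]
    have h2 : (μ * Equiv.swap (fe n k₀) (fo n k₀)) (fo n k₀) = μ (fe n k₀) := by
      simp [Perm.mul_apply]
    rw [h1, h2, hB (μ (fe n k₀)) (μ (fo n k₀))]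
    rw [Finset.prod_congr rfl (fun k hk => ?_)]
    · ring
    · have hkk : k ≠ k₀ := (Finset.mem_erase.mp hk).1
      have e1 : (μ * Equiv.swap (fe n k₀) (fo n k₀)) (fe n k) = μ (fe n k) := by
        rw [Perm.mul_apply, Equiv.swap_apply_of_ne_of_ne (by simp [hkk]) (by simp)]
      have e2 : (μ * Equiv.swap (fe n k₀) (fo n k₀)) (fo n k) = μ (fo n k) := by
        rw [Perm.mul_apply, Equiv.swap_apply_of_ne_of_ne (by simp) (by simp [hkk])]
      rw [e1, e2]
  rw [hprod]
  push_cast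
  ring

lemma term_mul_blk (μ : Perm (Fin (2 * n))) (π : Perm (Fin n)) :
    term B (μ * blk π) = term B μ := by
  unfold term
  rw [Equiv.Perm.sign_mul, sign_blk, mul_one]
  congr 1
  calc ∏ k : Fin n, B ((μ * blk π) (fe n k)) ((μ * blk π) (fo n k))
      = ∏ k : Fin n, B (μ (fe n (π k))) (μ (fo n (π k))) := by
        refine Finset.prod_congr rfl fun k _ => by rw [Perm.mul_apply, Perm.mul_apply,
          blk_fe, blk_fo]
    _ = ∏ k : Fin n, B (μ (fe n k)) (μ (fo n k)) :=
        Equiv.prod_comp π (fun k => B (μ (fe n k)) (μ (fo n k)))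

lemma term_mul_flips (hB : ∀ i j, B j i = -B i j) (μ : Perm (Fin (2 * n)))
    (s : Finset (Fin n)) : term B (μ * flips s) = term B μ := by
  classical
  induction s using Finset.induction_on generalizing μ with
  | empty => simp [flips]; exact congrArg (term B) (mul_one μ)
  | insert _ _ ha =>
      rename_i a s ih
      rw [flips_insert ha, ← mul_assoc, ih (μ * Equiv.swap (fe n a) (fo n a)),
        term_mul_swap B hB]

end TermInv

/-- the set of "badly ordered" pairs of a permutation -/
def bad (μ : Perm (Fin (2 * n))) : Finset (Fin n) :=
  Finset.univ.filter (fun k => μ (fo n k) < μ (fe n k))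

/-- first normalization step: flip the bad pairs -/
def mu1 (μ : Perm (Fin (2 * n))) : Perm (Fin (2 * n)) := μ * flips (bad μ)

lemma mu1_lt (μ : Perm (Fin (2 * n))) (k : Fin n) : mu1 μ (fe n k) < mu1 μ (fo n k) := by
  unfold mu1
  rw [Perm.mul_apply, Perm.mul_apply, (flips_apply (bad μ) k).1, (flips_apply (bad μ) k).2]
  by_cases hk : k ∈ bad μ
  · rw [if_pos hk, if_pos hk]
    exact (Finset.mem_filter.mp hk).2
  · rw [if_neg hk, if_neg hk]
    have hle : ¬ (μ (fo n k) < μ (fe n k)) := by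
      intro hlt; exact hk (Finset.mem_filter.mpr ⟨Finset.mem_univ k, hlt⟩)
    exact lt_of_le_of_ne (not_lt.mp hle) (fun h => fe_ne_fo k k (μ.injective h))

/-- full canonicalization -/
noncomputable def canon (μ : Perm (Fin (2 * n))) : Perm (Fin (2 * n)) :=
  mu1 μ * blk (Tuple.sort (fun k => mu1 μ (fe n k)))

lemma canon_apply_fe (μ : Perm (Fin (2 * n))) (k : Fin n) :
    canon μ (fe n k) = mu1 μ (fe n (Tuple.sort (fun k => mu1 μ (fe n k)) k)) := by
  rw [canon, Perm.mul_apply, blk_fe]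

lemma canon_apply_fo (μ : Perm (Fin (2 * n))) (k : Fin n) :
    canon μ (fo n k) = mu1 μ (fo n (Tuple.sort (fun k => mu1 μ (fe n k)) k)) := by
  rw [canon, Perm.mul_apply, blk_fo]

lemma canon_mem (μ : Perm (Fin (2 * n))) : canon μ ∈ canonSet n := by
  rw [mem_canonSet]
  constructor
  · intro k
    rw [canon_apply_fe, canon_apply_fo]
    exact mu1_lt μ _
  · intro k l hkl
    rw [canon_apply_fe, canon_apply_fe]
    have hmono : Monotone ((fun k => mu1 μ (fe n k)) ∘ Tuple.sort (fun k => mu1 μ (fe n k))) :=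
      Tuple.monotone_sort _
    have hinj : Function.Injective
        ((fun k => mu1 μ (fe n k)) ∘ Tuple.sort (fun k => mu1 μ (fe n k))) :=
      ((mu1 μ).injective.comp fe_inj).comp (Tuple.sort _).injective
    exact hmono.strictMono_of_injective hinj hkl

lemma canon_factor (μ : Perm (Fin (2 * n))) :
    ∃ h : Perm (Fin (2 * n)), Hp h ∧ canon μ = μ * h :=
  ⟨flips (bad μ) * blk (Tuple.sort (fun k => mu1 μ (fe n k))),
    Hp_mul (Hp_flips _) (Hp_blk _), by rw [canon, mu1, mul_assoc]⟩

lemma term_canon (B : Matrix (Fin (2 * n)) (Fin (2 * n)) R) (hB : ∀ i j, B j i = -B i j)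
    (μ : Perm (Fin (2 * n))) : term B (canon μ) = term B μ := by
  rw [canon, term_mul_blk, mu1, term_mul_flips B hB]

/-- uniqueness of canonical forms within a right H-coset -/
lemma canon_unique {σ τ : Perm (Fin (2 * n))} (hσ : σ ∈ canonSet n) (hτ : τ ∈ canonSet n)
    (h : Perm (Fin (2 * n))) (hh : Hp h) (heq : τ = σ * h) : τ = σ := by
  rw [mem_canonSet] at hσ hτ
  have key : ∀ k, τ (fe n k) = σ (fe n (pmap hh k)) ∧ τ (fo n k) = σ (fo n (pmap hh k)) := by
    intro k
    rcases pmap_spec hh k with ⟨a, b⟩ | ⟨a, b⟩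
    · exact ⟨by rw [heq, Perm.mul_apply, a], by rw [heq, Perm.mul_apply, b]⟩
    · exfalso
      have h1 : τ (fe n k) = σ (fo n (pmap hh k)) := by rw [heq, Perm.mul_apply, a]
      have h2 : τ (fo n k) = σ (fe n (pmap hh k)) := by rw [heq, Perm.mul_apply, b]
      have := hτ.1 k
      rw [h1, h2] at this
      exact absurd (hσ.1 (pmap hh k)) (not_lt.mpr this.le)
  have hsm : StrictMono (fun k => σ (fe n k)) := fun k l hkl => hσ.2 k l hkl
  have hpsm : StrictMono (pmap hh) := by
    intro k l hkl
    have := hτ.2 k l hkl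
    rw [(key k).1, (key l).1] at this
    exact hsm.lt_iff_lt.mp this
  have hpid : pmap hh = id := by
    have : Set.range (pmap hh) = Set.range (id : Fin n → Fin n) := by
      rw [(pmap_surj hh).range_eq, Set.range_id]
    haveI hwf : WellFoundedLT (Fin n) := Finite.to_wellFoundedLT
    have hid : StrictMono (id : Fin n → Fin n) := strictMono_id
    exact (hpsm.range_inj hid).mp this
  ext i
  rcases eo_cases i with ⟨k, rfl⟩ | ⟨k, rfl⟩
  · rw [(key k).1, hpid]; rfl
  · rw [(key k).2, hpid]; rfl

lemma canon_eq_of_rel {σ : Perm (Fin (2 * n))} (hσ : σ ∈ canonSet n)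
    (h : Perm (Fin (2 * n))) (hh : Hp h) : canon (σ * h) = σ := by
  obtain ⟨h', hh', heq⟩ := canon_factor (σ * h)
  exact canon_unique hσ (canon_mem _) (h * h') (Hp_mul hh hh') (by rw [heq, mul_assoc])

/-- pf of a simultaneously permuted antisymmetric matrix -/
lemma pf_submatrix_perm (B : Matrix (Fin (2 * n)) (Fin (2 * n)) R)
    (hB : ∀ i j, B j i = -B i j) (ρ : Perm (Fin (2 * n))) :
    pf (B.submatrix ρ ρ) = ((Perm.sign ρ : ℤ) : R) * pf B := by
  rw [pf_eq, pf_eq]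
  have step1 : ∀ σ : Perm (Fin (2 * n)),
      term (B.submatrix ρ ρ) σ = ((Perm.sign ρ : ℤ) : R) * term B (ρ * σ) := by
    intro σ
    unfold term
    rw [Equiv.Perm.sign_mul]
    simp only [Matrix.submatrix_apply, Perm.mul_apply]
    rcases Int.units_eq_one_or (Perm.sign ρ) with hs | hs <;>
      rcases Int.units_eq_one_or (Perm.sign σ) with ht | ht <;>
        rw [hs, ht] <;> push_cast <;> ring
  rw [Finset.sum_congr rfl (fun σ _ => step1 σ), ← Finset.mul_sum]
  congr 1
  refine Finset.sum_nbij' (fun σ => canon (ρ * σ)) (fun τ => canon (ρ⁻¹ * τ)) ?_ ?_ ?_ ?_ ?_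
  · intro σ _; exact canon_mem _
  · intro τ _; exact canon_mem _
  · intro σ hσ
    show canon (ρ⁻¹ * canon (ρ * σ)) = σ
    obtain ⟨h, hh, heq⟩ := canon_factor (ρ * σ)
    rw [heq, ← mul_assoc, inv_mul_cancel_left ρ]
    exact canon_eq_of_rel hσ h hh
  · intro τ hτ
    show canon (ρ * canon (ρ⁻¹ * τ)) = τ
    obtain ⟨h, hh, heq⟩ := canon_factor (ρ⁻¹ * τ)
    rw [heq, ← mul_assoc, mul_inv_cancel_left ρ]
    exact canon_eq_of_rel hτ h hh
  · intro σ _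
    exact (term_canon B hB (ρ * σ)).symm

lemma pf_eq_neg_self (B : Matrix (Fin (2 * n)) (Fin (2 * n)) R)
    (hB : ∀ i j, B j i = -B i j) {i j : Fin (2 * n)} (hij : i ≠ j)
    (hrow : ∀ x, B i x = B j x) (hcol : ∀ x, B x i = B x j) :
    pf B + pf B = 0 := by
  have hsub : B.submatrix (Equiv.swap i j) (Equiv.swap i j) = B := by
    ext x y
    rw [Matrix.submatrix_apply]
    have hr : ∀ w, B (Equiv.swap i j x) w = B x w := by
      intro w
      rcases eq_or_ne x i with rfl | hxi
      · rw [Equiv.swap_apply_left, ← hrow]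
      rcases eq_or_ne x j with rfl | hxj
      · rw [Equiv.swap_apply_right, hrow]
      · rw [Equiv.swap_apply_of_ne_of_ne hxi hxj]
    have hc : ∀ w, B w (Equiv.swap i j y) = B w y := by
      intro w
      rcases eq_or_ne y i with rfl | hyi
      · rw [Equiv.swap_apply_left, ← hcol]
      rcases eq_or_ne y j with rfl | hyj
      · rw [Equiv.swap_apply_right, hcol]
      · rw [Equiv.swap_apply_of_ne_of_ne hyi hyj]
    rw [hr, hc]
  have := pf_submatrix_perm B hB (Equiv.swap i j)
  rw [hsub, Perm.sign_swap hij] at this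
  push_cast at this
  linear_combination this

/-! ### Expansion of `pf (T * A * Tᵀ)` over functions -/

/-- the pairing equivalence -/
def EO (n : ℕ) : Fin n × Bool ≃ Fin (2 * n) where
  toFun := fun p => if p.2 then fo n p.1 else fe n p.1
  invFun := fun i => (half i, decide (i.val % 2 = 1))
  left_inv := by
    rintro ⟨k, b⟩
    cases b <;> simp [half_fe, half_fo, fe_mod, fo_mod]
  right_inv := by
    intro i
    rcases eo_cases i with ⟨k, rfl⟩ | ⟨k, rfl⟩ <;>
      simp [half_fe, half_fo, fe_mod, fo_mod]

lemma prod_split (f : Fin (2 * n) → R) :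
    ∏ i : Fin (2 * n), f i = ∏ k : Fin n, f (fe n k) * f (fo n k) := by
  rw [← Equiv.prod_comp (EO n) f, Fintype.prod_prod_type]
  refine Finset.prod_congr rfl fun k _ => ?_
  rw [Fintype.prod_bool]
  simp [EO, mul_comm]

section Expand

variable {M : ℕ} (T : Matrix (Fin (2 * n)) (Fin M) R) (A : Matrix (Fin M) (Fin M) R)

lemma TAT_entry (i j : Fin (2 * n)) :
    (T * A * Tᵀ) i j = ∑ ab : Fin M × Fin M, T i ab.1 * A ab.1 ab.2 * T j ab.2 := by
  calc (T * A * Tᵀ) i j = ∑ b, (∑ a, T i a * A a b) * T j b := by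
        simp [Matrix.mul_apply]
    _ = ∑ b, ∑ a, T i a * A a b * T j b := by
        refine Finset.sum_congr rfl fun b _ => ?_
        rw [Finset.sum_mul]
    _ = ∑ a, ∑ b, T i a * A a b * T j b := Finset.sum_comm
    _ = ∑ ab : Fin M × Fin M, T i ab.1 * A ab.1 ab.2 * T j ab.2 := by
        rw [Fintype.sum_prod_type]

/-- function associated to a permutation and a family of pairs -/
def gOf (σ : Perm (Fin (2 * n))) (p : Fin n → Fin M × Fin M) : Fin (2 * n) → Fin M :=
  fun i => if (σ⁻¹ i).val % 2 = 0 then (p (half (σ⁻¹ i))).1 else (p (half (σ⁻¹ i))).2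

lemma gOf_fe (σ : Perm (Fin (2 * n))) (p : Fin n → Fin M × Fin M) (k : Fin n) :
    gOf σ p (σ (fe n k)) = (p k).1 := by
  simp [gOf, Equiv.symm_apply_apply, fe_mod, half_fe]

lemma gOf_fo (σ : Perm (Fin (2 * n))) (p : Fin n → Fin M × Fin M) (k : Fin n) :
    gOf σ p (σ (fo n k)) = (p k).2 := by
  simp [gOf, Equiv.symm_apply_apply, fo_mod, half_fo]

lemma pf_expand :
    pf (T * A * Tᵀ) =
      ∑ g : Fin (2 * n) → Fin M, (∏ i, T i (g i)) * pf (A.submatrix g g) := by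
  rw [pf_eq]
  have hterm : ∀ σ ∈ canonSet n, term (T * A * Tᵀ) σ =
      ∑ g : Fin (2 * n) → Fin M, (∏ i, T i (g i)) * term (A.submatrix g g) σ := by
    intro σ _
    unfold term
    simp only [Matrix.submatrix_apply]
    calc ((Perm.sign σ : ℤ) : R) * ∏ k : Fin n, (T * A * Tᵀ) (σ (fe n k)) (σ (fo n k))
        = ((Perm.sign σ : ℤ) : R) * ∏ k : Fin n,
            ∑ ab : Fin M × Fin M, T (σ (fe n k)) ab.1 * A ab.1 ab.2 * T (σ (fo n k)) ab.2 := by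
          rw [Finset.prod_congr rfl fun k _ => TAT_entry T A _ _]
      _ = ((Perm.sign σ : ℤ) : R) * ∑ p : Fin n → Fin M × Fin M,
            ∏ k : Fin n, T (σ (fe n k)) (p k).1 * A (p k).1 (p k).2 * T (σ (fo n k)) (p k).2 := by
          rw [Fintype.prod_sum]
      _ = ∑ p : Fin n → Fin M × Fin M, ((Perm.sign σ : ℤ) : R) *
            ∏ k : Fin n, T (σ (fe n k)) (p k).1 * A (p k).1 (p k).2 * T (σ (fo n k)) (p k).2 := by
          rw [Finset.mul_sum]
      _ = ∑ g : Fin (2 * n) → Fin M, (∏ i, T i (g i)) *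
            (((Perm.sign σ : ℤ) : R) * ∏ k : Fin n, A (g (σ (fe n k))) (g (σ (fo n k)))) := by
          refine Finset.sum_nbij' (fun p => gOf σ p)
            (fun g => fun k => (g (σ (fe n k)), g (σ (fo n k)))) ?_ ?_ ?_ ?_ ?_
          · intro p _; exact Finset.mem_univ _
          · intro g _; exact Finset.mem_univ _
          · intro p _
            funext k
            simp [gOf_fe, gOf_fo]
          · intro g _
            funext i
            rcases eo_cases (σ⁻¹ i) with ⟨k, hk⟩ | ⟨k, hk⟩
            · have : i = σ (fe n k) := by rw [← hk, Equiv.Perm.coe_inv, Equiv.apply_symm_apply]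
              rw [this]
              simp only [gOf_fe]
            · have : i = σ (fo n k) := by rw [← hk, Equiv.Perm.coe_inv, Equiv.apply_symm_apply]
              rw [this]
              simp only [gOf_fo]
          · intro p _
            have hT : ∏ i, T i (gOf σ p i) =
                ∏ k : Fin n, T (σ (fe n k)) (p k).1 * T (σ (fo n k)) (p k).2 := by
              rw [← Equiv.prod_comp σ (fun i => T i (gOf σ p i)),
                prod_split (fun i => T (σ i) (gOf σ p (σ i)))]
              exact Finset.prod_congr rfl fun k _ => by rw [gOf_fe, gOf_fo]
            have hA : ∏ k : Fin n, A (gOf σ p (σ (fe n k))) (gOf σ p (σ (fo n k))) =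
                ∏ k : Fin n, A (p k).1 (p k).2 := by
              exact Finset.prod_congr rfl fun k _ => by rw [gOf_fe, gOf_fo]
            have key : ∀ k : Fin n,
                T (σ (fe n k)) (p k).1 * A (p k).1 (p k).2 * T (σ (fo n k)) (p k).2
                  = T (σ (fe n k)) (p k).1 * T (σ (fo n k)) (p k).2 * A (p k).1 (p k).2 :=
              fun k => by ring
            rw [hT, hA, Finset.prod_congr rfl (fun k _ => key k), Finset.prod_mul_distrib]
            ring
  rw [Finset.sum_congr rfl hterm, Finset.sum_comm]
  refine Finset.sum_congr rfl fun g _ => ?_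
  rw [pf_eq, Finset.mul_sum]

end Expand

/-! ### Regrouping the sum over injective functions -/

section Regroup

variable {M : ℕ}

lemma card_image_univ {g : Fin (2 * n) → Fin M} (hg : Function.Injective g) :
    (Finset.univ.image g).card = 2 * n := by
  rw [Finset.card_image_of_injective _ hg, Finset.card_univ, Fintype.card_fin]

lemma mem_image_self (g : Fin (2 * n) → Fin M) (i : Fin (2 * n)) :
    g i ∈ Finset.univ.image g :=
  Finset.mem_image.mpr ⟨i, Finset.mem_univ i, rfl⟩

/-- the permutation comparing an injective map with the monotone enumeration of its image -/
noncomputable def permOf {g : Fin (2 * n) → Fin M} (hg : Function.Injective g) :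
    Perm (Fin (2 * n)) :=
  Equiv.ofBijective
    (fun i => ((Finset.univ.image g).orderIsoOfFin (card_image_univ hg)).symm
      ⟨g i, mem_image_self g i⟩)
    (Finite.injective_iff_bijective.mp (fun a b hab => by
      have := congrArg (fun x => (((Finset.univ.image g).orderIsoOfFin
        (card_image_univ hg)) x).val) hab
      simp only [OrderIso.apply_symm_apply] at this
      exact hg this))

lemma permOf_spec {g : Fin (2 * n) → Fin M} (hg : Function.Injective g) (i : Fin (2 * n)) :
    (Finset.univ.image g).orderEmbOfFin (card_image_univ hg) (permOf hg i) = g i := by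
  rw [← Finset.coe_orderIsoOfFin_apply]
  show (((Finset.univ.image g).orderIsoOfFin (card_image_univ hg))
    (((Finset.univ.image g).orderIsoOfFin (card_image_univ hg)).symm ⟨g i, _⟩) : Fin M) = g i
  rw [OrderIso.apply_symm_apply]

lemma orderEmbOfFin_congr {S S' : Finset (Fin M)} (hSS : S = S') {c : S.card = 2 * n}
    {c' : S'.card = 2 * n} (i : Fin (2 * n)) :
    S.orderEmbOfFin c i = S'.orderEmbOfFin c' i := by
  subst hSS; rfl

lemma regroup (T : Matrix (Fin (2 * n)) (Fin M) R) (A : Matrix (Fin M) (Fin M) R)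
    (hA' : ∀ a b, A b a = -A a b) (hA0 : ∀ a, A a a = 0)
    (htor : ∀ x : R, x + x = 0 → x = 0) :
    ∑ g : Fin (2 * n) → Fin M, (∏ i, T i (g i)) * pf (A.submatrix g g)
      = ∑ S : {S : Finset (Fin M) // S.card = 2 * n},
          pf (A.submatrix (fun i => S.1.orderEmbOfFin S.2 i) (fun j => S.1.orderEmbOfFin S.2 j)) *
            (T.submatrix id (fun j => S.1.orderEmbOfFin S.2 j)).det := by
  classical
  rw [← Finset.sum_filter_add_sum_filter_not Finset.univ
    (fun g : Fin (2 * n) → Fin M => Function.Injective g)]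
  have hnon : ∑ g ∈ Finset.univ.filter
      (fun g : Fin (2 * n) → Fin M => ¬ Function.Injective g),
      (∏ i, T i (g i)) * pf (A.submatrix g g) = 0 := by
    refine Finset.sum_eq_zero fun g hg => ?_
    have hni : ¬ Function.Injective g := (Finset.mem_filter.mp hg).2
    rw [Function.Injective] at hni
    push_neg at hni
    obtain ⟨i, j, hgij, hij⟩ := hni
    have hpf : pf (A.submatrix g g) = 0 := by
      refine htor _ (pf_eq_neg_self (A.submatrix g g)
        (fun x y => by simp only [Matrix.submatrix_apply]; exact hA' _ _) hij
        (fun x => by simp only [Matrix.submatrix_apply, hgij])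
        (fun x => by simp only [Matrix.submatrix_apply, hgij]))
    rw [hpf, mul_zero]
  rw [hnon, add_zero]
  have hdet : ∀ S : {S : Finset (Fin M) // S.card = 2 * n},
      pf (A.submatrix (fun i => S.1.orderEmbOfFin S.2 i) (fun j => S.1.orderEmbOfFin S.2 j)) *
        (T.submatrix id (fun j => S.1.orderEmbOfFin S.2 j)).det
      = ∑ σ : Perm (Fin (2 * n)),
          pf (A.submatrix (fun i => S.1.orderEmbOfFin S.2 i) (fun j => S.1.orderEmbOfFin S.2 j)) *
            (((Perm.sign σ : ℤ) : R) * ∏ i, T (σ i) (S.1.orderEmbOfFin S.2 i)) := by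
    intro S
    rw [Matrix.det_apply', Finset.mul_sum]
    rfl
  rw [Finset.sum_congr rfl fun S _ => hdet S, ← Fintype.sum_prod_type']
  refine Finset.sum_bij'
    (fun g hg => (⟨Finset.univ.image g, card_image_univ (Finset.mem_filter.mp hg).2⟩,
      (permOf (Finset.mem_filter.mp hg).2)⁻¹))
    (fun x _ => fun i => x.1.1.orderEmbOfFin x.1.2 (x.2⁻¹ i)) ?_ ?_ ?_ ?_ ?_
  · intro g hg; exact Finset.mem_univ _
  · intro x _
    refine Finset.mem_filter.mpr ⟨Finset.mem_univ _, ?_⟩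
    exact (x.1.1.orderEmbOfFin x.1.2).injective.comp x.2⁻¹.injective
  · -- left inverse : j (i g) = g
    intro g hg
    funext i
    simp only [inv_inv]
    exact permOf_spec (Finset.mem_filter.mp hg).2 i
  · -- right inverse : i (j x) = x
    intro x _
    obtain ⟨⟨S, hS⟩, σ⟩ := x
    have hinj : Function.Injective (fun i => S.orderEmbOfFin hS (σ⁻¹ i)) :=
      (S.orderEmbOfFin hS).injective.comp σ⁻¹.injective
    have himg : Finset.univ.image (fun i => S.orderEmbOfFin hS (σ⁻¹ i)) = S := by
      ext x
      simp only [Finset.mem_image, Finset.mem_univ, true_and]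
      constructor
      · rintro ⟨i, rfl⟩; exact Finset.orderEmbOfFin_mem _ _ _
      · intro hx
        have : x ∈ Set.range (S.orderEmbOfFin hS) := by
          rw [Finset.range_orderEmbOfFin]; exact hx
        obtain ⟨i, hi⟩ := this
        exact ⟨σ i, by rw [Equiv.Perm.coe_inv, Equiv.symm_apply_apply, hi]⟩
    refine Prod.ext (Subtype.ext ?_) ?_
    · exact himg
    · -- (permOf _)⁻¹ = σ
      show (permOf _)⁻¹ = σ
      have hperm : permOf ((Finset.mem_filter.mp (Finset.mem_filter.mpr
          ⟨Finset.mem_univ _, hinj⟩)).2) = σ⁻¹ := by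
        refine Equiv.ext fun i => ?_
        show ((Finset.univ.image _).orderIsoOfFin (card_image_univ hinj)).symm ⟨S.orderEmbOfFin hS (σ⁻¹ i), _⟩ = σ⁻¹ i
        rw [OrderIso.symm_apply_eq]
        refine Subtype.ext ?_
        rw [Finset.coe_orderIsoOfFin_apply]
        exact (orderEmbOfFin_congr himg.symm (σ⁻¹ i))
      rw [hperm, inv_inv]
  · -- summand equality
    intro g hg
    have hg2 : Function.Injective g := (Finset.mem_filter.mp hg).2
    set ρ := permOf hg2 with hρ
    set emb' := (Finset.univ.image g).orderEmbOfFin (card_image_univ hg2) with hemb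
    have hfac : ∀ i, emb' (ρ i) = g i := permOf_spec hg2
    have hB : ∀ i j, (A.submatrix (fun i => emb' i) (fun j => emb' j)) j i
        = -(A.submatrix (fun i => emb' i) (fun j => emb' j)) i j := by
      intro i j
      simp only [Matrix.submatrix_apply]
      exact hA' _ _
    have hsubm : A.submatrix g g
        = (A.submatrix (fun i => emb' i) (fun j => emb' j)).submatrix ρ ρ := by
      ext i j
      simp only [Matrix.submatrix_apply, hfac]
    have hpf : pf (A.submatrix g g) = ((Perm.sign ρ : ℤ) : R)
        * pf (A.submatrix (fun i => emb' i) (fun j => emb' j)) := by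
      rw [hsubm]
      exact pf_submatrix_perm _ hB ρ
    have hprod : ∏ i, T i (g i) = ∏ i, T (ρ⁻¹ i) (emb' i) := by
      calc ∏ i, T i (g i) = ∏ i, T (ρ⁻¹ i) (g (ρ⁻¹ i)) :=
            (Equiv.prod_comp ρ⁻¹ (fun i => T i (g i))).symm
        _ = ∏ i, T (ρ⁻¹ i) (emb' i) := by
            refine Finset.prod_congr rfl fun i _ => ?_
            rw [← hfac (ρ⁻¹ i), Equiv.Perm.coe_inv, Equiv.apply_symm_apply]
    have hsign : ((Perm.sign ρ⁻¹ : ℤ) : R) = ((Perm.sign ρ : ℤ) : R) := by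
      rw [Equiv.Perm.sign_inv]
    show (∏ i, T i (g i)) * pf (A.submatrix g g)
        = pf (A.submatrix (fun i => emb' i) (fun j => emb' j))
          * (((Perm.sign ρ⁻¹ : ℤ) : R) * ∏ i, T (ρ⁻¹ i) (emb' i))
    rw [hpf, hprod, hsign]
    ring

end Regroup

/-! ### Generic matrices and transfer -/

section Transfer

/-- polynomial ring with a variable for each entry of `A` and of `T` -/
abbrev PR (n M : ℕ) : Type :=
  MvPolynomial ((Fin M × Fin M) ⊕ (Fin (2 * n) × Fin M)) ℤ

noncomputable def genA (n M : ℕ) : Matrix (Fin M) (Fin M) (PR n M) := fun a b =>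
  if a < b then MvPolynomial.X (Sum.inl (a, b))
  else if b < a then -MvPolynomial.X (Sum.inl (b, a))
  else 0

noncomputable def genT (n M : ℕ) : Matrix (Fin (2 * n)) (Fin M) (PR n M) := fun i a =>
  MvPolynomial.X (Sum.inr (i, a))

variable {M : ℕ}

lemma genA_anti : ∀ a b, genA n M b a = -genA n M a b := by
  intro a b
  unfold genA
  rcases lt_trichotomy a b with h | h | h
  · simp [h, asymm h]
  · subst h
    simp
  · simp [h, asymm h]

lemma genA_diag : ∀ a, genA n M a a = 0 := by
  intro a
  simp [genA]

lemma PR_tor (x : PR n M) (hx : x + x = 0) : x = 0 := by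
  have h2 : x + x = (1 + 1) * x := by ring
  rw [h2, mul_eq_zero] at hx
  rcases hx with h | h
  · exfalso
    have h' := congrArg (MvPolynomial.eval (fun _ => (0 : ℤ))) h
    rw [_root_.map_add, _root_.map_one, _root_.map_zero] at h'
    norm_num at h'
  · exact h

lemma generic_id (n M : ℕ) :
    ∑ S : {S : Finset (Fin M) // S.card = 2 * n},
      pf ((genA n M).submatrix (fun i => S.1.orderEmbOfFin S.2 i)
          (fun j => S.1.orderEmbOfFin S.2 j)) *
        ((genT n M).submatrix id (fun j => S.1.orderEmbOfFin S.2 j)).det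
      = pf (genT n M * genA n M * (genT n M)ᵀ) := by
  rw [pf_expand (genT n M) (genA n M),
    regroup (genT n M) (genA n M) genA_anti genA_diag PR_tor]

/-- the specialization homomorphism -/
noncomputable def specHom (T : Matrix (Fin (2 * n)) (Fin M) R) (A : Matrix (Fin M) (Fin M) R) :
    PR n M →+* R :=
  MvPolynomial.eval₂Hom (Int.castRingHom R)
    (fun v => Sum.rec (fun p => A p.1 p.2) (fun p => T p.1 p.2) v)

lemma specHom_genA (T : Matrix (Fin (2 * n)) (Fin M) R) (A : Matrix (Fin M) (Fin M) R)
    (hA' : ∀ a b, A b a = -A a b) (hA0 : ∀ a, A a a = 0) (a b : Fin M) :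
    specHom T A (genA n M a b) = A a b := by
  have hX : ∀ p : Fin M × Fin M, specHom T A (MvPolynomial.X (Sum.inl p)) = A p.1 p.2 := by
    intro p
    unfold specHom
    simp
  unfold genA
  rcases lt_trichotomy a b with h | h | h
  · rw [if_pos h, hX]
  · subst h
    rw [if_neg (lt_irrefl a), if_neg (lt_irrefl a), map_zero, hA0]
  · rw [if_neg (asymm h), if_pos h, map_neg, hX]
    rw [hA' a b, neg_neg]

lemma specHom_genT (T : Matrix (Fin (2 * n)) (Fin M) R) (A : Matrix (Fin M) (Fin M) R)
    (i : Fin (2 * n)) (a : Fin M) : specHom T A (genT n M i a) = T i a := by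
  unfold genT specHom
  simp

lemma map_pf {R' : Type*} [CommRing R'] (f : R' →+* R)
    (B : Matrix (Fin (2 * n)) (Fin (2 * n)) R') : f (pf B) = pf (B.map f) := by
  unfold pf
  rw [map_sum]
  refine Finset.sum_congr rfl fun σ _ => ?_
  rw [_root_.map_mul, map_intCast, _root_.map_prod]
  refine congrArg _ (Finset.prod_congr rfl fun k _ => rfl)

end Transfer

end PfAux

open PfAux in
/-- **Pfaffian analogue of the Cauchy–Binet identity** (Ishikawa–Wakayama).
For an even number `m = 2n`, `m ≤ M`, an `m × M` matrix `T` and an antisymmetric `M × M`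
matrix `A` over a commutative ring:
`Σ_{S ⊆ [M], |S| = m} Pf(A_S) · det(T_S) = Pf(T A Tᵗ)`,
where `A_S` (resp. `T_S`) is the submatrix with rows and columns (resp. columns)
indexed by `S` in increasing order. -/
theorem pfaffian_cauchy_binet {R : Type*} [CommRing R] (n M : ℕ) (hM : 2 * n ≤ M)
    (T : Matrix (Fin (2 * n)) (Fin M) R) (A : Matrix (Fin M) (Fin M) R)
    (hA : Aᵀ = -A) (hA0 : ∀ i, A i i = 0) :
    ∑ S : {S : Finset (Fin M) // S.card = 2 * n},
      pf (A.submatrix (fun i => S.1.orderEmbOfFin S.2 i) (fun j => S.1.orderEmbOfFin S.2 j)) *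
        (T.submatrix id (fun j => S.1.orderEmbOfFin S.2 j)).det =
      pf (T * A * Tᵀ) := by
  classical
  have hA' : ∀ a b, A b a = -A a b := by
    intro a b
    have := congrFun (congrFun hA a) b
    rwa [Matrix.transpose_apply, Matrix.neg_apply] at this
  set φ := PfAux.specHom T A with hφ
  have hmapT : (genT n M).map φ = T := by
    ext i a
    rw [Matrix.map_apply, PfAux.specHom_genT]
  have hmapA : (genA n M).map φ = A := by
    ext a b
    rw [Matrix.map_apply, PfAux.specHom_genA T A hA' hA0]
  have hL : ∀ S : {S : Finset (Fin M) // S.card = 2 * n},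
      pf (A.submatrix (fun i => S.1.orderEmbOfFin S.2 i) (fun j => S.1.orderEmbOfFin S.2 j)) *
        (T.submatrix id (fun j => S.1.orderEmbOfFin S.2 j)).det
      = φ (pf ((genA n M).submatrix (fun i => S.1.orderEmbOfFin S.2 i)
            (fun j => S.1.orderEmbOfFin S.2 j)) *
          ((genT n M).submatrix id (fun j => S.1.orderEmbOfFin S.2 j)).det) := by
    intro S
    rw [_root_.map_mul, PfAux.map_pf, RingHom.map_det, RingHom.mapMatrix_apply]
    congr 1
    · congr 1
      ext i j
      rw [Matrix.map_apply, Matrix.submatrix_apply, Matrix.submatrix_apply,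
        PfAux.specHom_genA T A hA' hA0]
    · congr 1
      ext i j
      rw [Matrix.map_apply, Matrix.submatrix_apply, Matrix.submatrix_apply,
        PfAux.specHom_genT]
  have hR : φ (pf (genT n M * genA n M * (genT n M)ᵀ)) = pf (T * A * Tᵀ) := by
    rw [PfAux.map_pf]
    congr 1
    calc (genT n M * genA n M * (genT n M)ᵀ).map φ
        = (genT n M).map φ * (genA n M).map φ * ((genT n M).map φ)ᵀ := by
          rw [Matrix.map_mul, Matrix.map_mul, Matrix.transpose_map]
      _ = T * A * Tᵀ := by rw [hmapT, hmapA]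
  calc ∑ S : {S : Finset (Fin M) // S.card = 2 * n},
      pf (A.submatrix (fun i => S.1.orderEmbOfFin S.2 i) (fun j => S.1.orderEmbOfFin S.2 j)) *
        (T.submatrix id (fun j => S.1.orderEmbOfFin S.2 j)).det
      = ∑ S : {S : Finset (Fin M) // S.card = 2 * n},
          φ (pf ((genA n M).submatrix (fun i => S.1.orderEmbOfFin S.2 i)
              (fun j => S.1.orderEmbOfFin S.2 j)) *
            ((genT n M).submatrix id (fun j => S.1.orderEmbOfFin S.2 j)).det) :=
        Finset.sum_congr rfl fun S _ => hL S
    _ = φ (pf (genT n M * genA n M * (genT n M)ᵀ)) := by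
        rw [← map_sum]
        exact congrArg φ (PfAux.generic_id n M)
    _ = pf (T * A * Tᵀ) := hR
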